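/- Let p be a prime, S a finite p-group, X a finite bifree (S,S)-biset, and P ≤ S. Then: (i) for every subgroup Q ≤ S isomorphic to P (as an abstract group), |N_S(Q)| divides the sum over all isomorphisms φ: P → Q of |X^{(P,φ)}| (where X^{(P,φ)} is taken with φ viewed as a map into S); and (ii) the sum over a set of representatives [Q] of the S-conjugacy classes of subgroups Q ≤ S isomorphic to P of the integers ( Σ_{φ: P → Q isomorphism} |X^{(P,φ)}| ) / |N_S(Q)| is congruent to |X|/|S| modulo p. -/

import Mathlib

/-! ## Bisets -/

/-- A `(G,H)`-biset structure on a type `X`: a left `H`-action and a right `G`-action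
that commute with each other. -/
structure BisetAction (G H : Type*) [Group G] [Group H] (X : Type*) where
  /-- the left `H`-action -/
  smul : H → X → X
  /-- the right `G`-action -/
  rmul : X → G → X
  one_smul : ∀ x, smul 1 x = x
  mul_smul : ∀ h₁ h₂ x, smul (h₁ * h₂) x = smul h₁ (smul h₂ x)
  rmul_one : ∀ x, rmul x 1 = x
  rmul_mul : ∀ x g₁ g₂, rmul x (g₁ * g₂) = rmul (rmul x g₁) g₂
  smul_rmul : ∀ h x g, rmul (smul h x) g = smul h (rmul x g)

namespace BisetAction

variable {G H K : Type*} [Group G] [Group H] [Group K] {X Y Z : Type*}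

lemma smul_smul (A : BisetAction G H X) (h₁ h₂ : H) (x : X) :
    A.smul h₁ (A.smul h₂ x) = A.smul (h₁ * h₂) x := (A.mul_smul h₁ h₂ x).symm

lemma rmul_rmul (A : BisetAction G H X) (x : X) (g₁ g₂ : G) :
    A.rmul (A.rmul x g₁) g₂ = A.rmul x (g₁ * g₂) := (A.rmul_mul x g₁ g₂).symm

/-- The biset is left-free. -/
def LeftFree (A : BisetAction G H X) : Prop := ∀ (h : H) (x : X), A.smul h x = x → h = 1

/-- The biset is right-free. -/
def RightFree (A : BisetAction G H X) : Prop := ∀ (g : G) (x : X), A.rmul x g = x → g = 1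

/-- The biset is bifree: both actions are free. -/
def Bifree (A : BisetAction G H X) : Prop := A.LeftFree ∧ A.RightFree

/-- The fixed-point set `X^{(P,φ)} = {x | x·u = φ(u)·x for all u ∈ P}`. -/
def Fix (A : BisetAction G H X) (P : Subgroup G) (φ : P →* H) : Set X :=
  {x | ∀ u : P, A.rmul x u = A.smul (φ u) x}

/-- The opposite biset: same underlying set, with the two actions reversed
(`g·x·h` in `op A` is `h⁻¹·x·g⁻¹` in `A`). -/
def op (A : BisetAction G H X) : BisetAction H G X where
  smul g x := A.rmul x g⁻¹
  rmul x h := A.smul h⁻¹ x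
  one_smul x := by simpa using A.rmul_one x
  mul_smul g₁ g₂ x := by rw [mul_inv_rev, A.rmul_mul]
  rmul_one x := by simpa using A.one_smul x
  rmul_mul x h₁ h₂ := by rw [mul_inv_rev, A.mul_smul]
  smul_rmul g x h := (A.smul_rmul h⁻¹ x g⁻¹).symm

/-- The setoid of left `H`-orbits. -/
def leftOrbitSetoid (A : BisetAction G H X) : Setoid X where
  r x y := ∃ h : H, y = A.smul h x
  iseqv := by
    refine ⟨fun x => ⟨1, (A.one_smul x).symm⟩, ?_, ?_⟩
    · rintro x y ⟨h, rfl⟩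
      exact ⟨h⁻¹, by rw [A.smul_smul, inv_mul_cancel, A.one_smul]⟩
    · rintro x y z ⟨h₁, rfl⟩ ⟨h₂, rfl⟩
      exact ⟨h₂ * h₁, A.smul_smul h₂ h₁ x⟩

/-- The set of left `H`-orbits of the biset. -/
def leftOrbits (A : BisetAction G H X) : Type _ := Quotient (A.leftOrbitSetoid)

/-- Restricting the right action along a homomorphism `φ : P →* G`. -/
def restrictRight (A : BisetAction G H X) {P : Type*} [Group P] (φ : P →* G) :
    BisetAction P H X where
  smul := A.smul
  rmul x u := A.rmul x (φ u)
  one_smul := A.one_smul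
  mul_smul := A.mul_smul
  rmul_one x := by rw [map_one, A.rmul_one]
  rmul_mul x u₁ u₂ := by rw [map_mul, A.rmul_mul]
  smul_rmul h x u := A.smul_rmul h x (φ u)

/-- Restricting the left action along a homomorphism `φ : P →* H`. -/
def restrictLeft (A : BisetAction G H X) {P : Type*} [Group P] (φ : P →* H) :
    BisetAction G P X where
  smul u x := A.smul (φ u) x
  rmul := A.rmul
  one_smul x := by rw [map_one, A.one_smul]
  mul_smul u₁ u₂ x := by rw [map_mul, A.mul_smul]
  rmul_one := A.rmul_one
  rmul_mul := A.rmul_mul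
  smul_rmul u x g := A.smul_rmul (φ u) x g

end BisetAction

/-- An isomorphism of `(G,H)`-bisets: an equivalence of underlying sets commuting with
both actions. -/
structure BisetIso {G H : Type*} [Group G] [Group H] {X Y : Type*}
    (A : BisetAction G H X) (B : BisetAction G H Y) extends X ≃ Y where
  map_smul : ∀ (h : H) (x : X), toEquiv (A.smul h x) = B.smul h (toEquiv x)
  map_rmul : ∀ (x : X) (g : G), toEquiv (A.rmul x g) = B.rmul (toEquiv x) g

/-- Finitely many homomorphisms between finite monoids. -/
instance monoidHomFinite {M N : Type*} [MulOneClass M] [MulOneClass N] [Finite M]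
    [Finite N] : Finite (M →* N) :=
  Finite.of_injective (fun f => (f : M → N)) DFunLike.coe_injective

/-- Two subgroups `Q Q' ≤ S` are `S`-conjugate. -/
def SubSConj {S : Type*} [Group S] (Q Q' : Subgroup S) : Prop :=
  ∃ s : S, Q.map (MulAut.conj s).toMonoidHom = Q'
/-! ### Auxiliary machinery for the proof -/

section FreeCounting

open Function

/-- Counting for a free action presented by a raw action map together with a
surjection `q` onto the set of orbits. -/
theorem free_act_card {G α β : Type*} [Group G] (act : G → α → α)
    (h1 : ∀ x, act 1 x = x)
    (hmul : ∀ g h x, act (g * h) x = act g (act h x))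
    (hfree : ∀ g x, act g x = x → g = 1)
    (q : α → β) (hqs : Surjective q)
    (hq : ∀ x y, q x = q y ↔ ∃ g, y = act g x) :
    Nat.card α = Nat.card β * Nat.card G := by
  obtain ⟨σ, hσ⟩ := hqs.hasRightInverse
  have hcancel : ∀ (g g' : G) (x : α), act g x = act g' x → g = g' := by
    intro g g' x h
    have h2 : act (g'⁻¹ * g) x = x := by
      rw [hmul, h, ← hmul, inv_mul_cancel, h1]
    exact (inv_mul_eq_one.mp (hfree _ _ h2)).symm
  have hqact : ∀ (g : G) (x : α), q (act g x) = q x :=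
    fun g x => ((hq x (act g x)).mpr ⟨g, rfl⟩).symm
  have hbij : Function.Bijective (fun bg : β × G => act bg.2 (σ bg.1)) := by
    constructor
    · rintro ⟨b, g⟩ ⟨b', g'⟩ h
      simp only at h
      have hb : b = b' := by
        have h3 := congrArg q h
        rwa [hqact, hqact, hσ b, hσ b'] at h3
      subst hb
      have hg : g = g' := hcancel _ _ _ h
      rw [hg]
    · intro x
      obtain ⟨g, hg⟩ := (hq (σ (q x)) x).mp (hσ (q x))
      exact ⟨(q x, g), hg.symm⟩
  rw [← Nat.card_prod]
  exact (Nat.card_eq_of_bijective _ hbij).symm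

/-- A free action of a group divides the cardinality. -/
theorem free_act_dvd {G α : Type*} [Group G] (act : G → α → α)
    (h1 : ∀ x, act 1 x = x)
    (hmul : ∀ g h x, act (g * h) x = act g (act h x))
    (hfree : ∀ g x, act g x = x → g = 1) :
    Nat.card G ∣ Nat.card α := by
  letI s : Setoid α :=
    ⟨fun x y => ∃ g, y = act g x,
      ⟨fun x => ⟨1, (h1 x).symm⟩,
       fun {x y} h => by
         obtain ⟨g, rfl⟩ := h
         exact ⟨g⁻¹, by rw [← hmul, inv_mul_cancel, h1]⟩,
       fun {x y z} h h' => by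
         obtain ⟨g, rfl⟩ := h
         obtain ⟨g', rfl⟩ := h'
         exact ⟨g' * g, (hmul g' g x).symm⟩⟩⟩
  refine ⟨Nat.card (Quotient s), ?_⟩
  rw [mul_comm]
  exact free_act_card act h1 hmul hfree (Quotient.mk s)
    (fun y => Quotient.inductionOn y fun x => ⟨x, rfl⟩)
    (fun x y => ⟨fun h => Quotient.exact h, fun ⟨g, hg⟩ => Quot.sound ⟨g, hg⟩⟩)

end FreeCounting
section ConjMachinery

variable {S : Type*} [Group S]

/-- Conjugation by `s` as a monoid homomorphism. -/
def cconj (s : S) : S →* S := (MulAut.conj s).toMonoidHom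

lemma cconj_apply (s t : S) : cconj s t = s * t * s⁻¹ := rfl

lemma cconj_comp (s t : S) : (cconj s).comp (cconj t) = cconj (s * t) := by
  ext x
  show s * (t * x * t⁻¹) * s⁻¹ = (s * t) * x * (s * t)⁻¹
  group

lemma cconj_one : cconj (1 : S) = MonoidHom.id S := by
  ext x
  show 1 * x * 1⁻¹ = x
  group

lemma cconj_injective (s : S) : Function.Injective (cconj s) :=
  (MulAut.conj s).injective

lemma map_cconj_eq_iff (Q : Subgroup S) (s : S) :
    Q.map (cconj s) = Q ↔ s ∈ (Subgroup.normalizer (Q : Set S)) := by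
  constructor
  · intro h
    rw [Subgroup.mem_normalizer_iff]
    intro x
    constructor
    · intro hx
      have h2 : cconj s x ∈ Q.map (cconj s) := Subgroup.mem_map.mpr ⟨x, hx, rfl⟩
      rw [h] at h2
      exact h2
    · intro hx
      rw [← h] at hx
      obtain ⟨y, hy, hxy⟩ := Subgroup.mem_map.mp hx
      have hyx : y = x := cconj_injective s (hxy.trans (cconj_apply s x).symm)
      rwa [hyx] at hy
  · intro hs
    ext x
    rw [Subgroup.mem_map]
    constructor
    · rintro ⟨y, hy, rfl⟩
      exact (Subgroup.mem_normalizer_iff.mp hs y).mp hy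
    · intro hx
      refine ⟨s⁻¹ * x * s, ?_, ?_⟩
      · exact (Subgroup.mem_normalizer_iff''.mp hs x).mp hx
      · show s * (s⁻¹ * x * s) * s⁻¹ = x
        group

lemma SubSConj.refl (Q : Subgroup S) : SubSConj Q Q :=
  ⟨1, by show Q.map (cconj 1) = Q; rw [cconj_one, Subgroup.map_id]⟩

lemma SubSConj.symm {Q Q' : Subgroup S} (h : SubSConj Q Q') : SubSConj Q' Q := by
  obtain ⟨s, rfl⟩ := h
  refine ⟨s⁻¹, ?_⟩
  show (Q.map (cconj s)).map (cconj s⁻¹) = Q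
  rw [Subgroup.map_map, cconj_comp, inv_mul_cancel, cconj_one, Subgroup.map_id]

lemma SubSConj.trans {Q Q' Q'' : Subgroup S} (h : SubSConj Q Q') (h' : SubSConj Q' Q'') :
    SubSConj Q Q'' := by
  obtain ⟨s, rfl⟩ := h
  obtain ⟨t, rfl⟩ := h'
  refine ⟨t * s, ?_⟩
  show Q.map (cconj (t * s)) = (Q.map (cconj s)).map (cconj t)
  rw [Subgroup.map_map, cconj_comp]

lemma card_conjClass_mul_card_normalizer (Q : Subgroup S) :
    Nat.card {Q' : Subgroup S // SubSConj Q' Q} * Nat.card (Subgroup.normalizer (Q : Set S)) = Nat.card S := by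
  have key := free_act_card (G := (Subgroup.normalizer (Q : Set S))) (α := S)
      (β := {Q' : Subgroup S // SubSConj Q' Q})
      (fun n s => s * (n : S)⁻¹)
      (fun s => by simp)
      (fun n m s => by simp [mul_assoc])
      (fun n s hs => by
        have h2 : (n : S)⁻¹ = 1 := by
          have h3 : s * (n : S)⁻¹ = s * 1 := by simpa using hs
          exact mul_left_cancel h3
        have h4 : (n : S) = 1 := inv_eq_one.mp h2
        exact Subtype.ext h4)
      (fun s => ⟨Q.map (cconj s), s⁻¹, by
        show (Q.map (cconj s)).map (cconj s⁻¹) = Q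
        rw [Subgroup.map_map, cconj_comp, inv_mul_cancel, cconj_one, Subgroup.map_id]⟩)
      ?_ ?_
  · exact key.symm
  · rintro ⟨Q', t, ht⟩
    have ht' : Q'.map (cconj t) = Q := ht
    refine ⟨t⁻¹, Subtype.ext ?_⟩
    show Q.map (cconj t⁻¹) = Q'
    rw [← ht', Subgroup.map_map, cconj_comp, inv_mul_cancel, cconj_one, Subgroup.map_id]
  · intro s s'
    refine Subtype.mk_eq_mk.trans ?_
    constructor
    · intro h
      have hn : s'⁻¹ * s ∈ (Subgroup.normalizer (Q : Set S)) := by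
        rw [← map_cconj_eq_iff Q, ← cconj_comp, ← Subgroup.map_map, h, Subgroup.map_map,
          cconj_comp, inv_mul_cancel, cconj_one, Subgroup.map_id]
      refine ⟨⟨s'⁻¹ * s, hn⟩, ?_⟩
      show s' = s * (s'⁻¹ * s)⁻¹
      group
    · rintro ⟨n, rfl⟩
      rw [← cconj_comp, ← Subgroup.map_map, (map_cconj_eq_iff Q _).mpr (inv_mem n.2)]

end ConjMachinery
namespace BisetAction

variable {S X : Type*} [Group S] (A : BisetAction S S X)

/-- The set of pairs `(φ, x)` with `φ : P →* S` injective of range `Q` and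
`x ∈ X^{(P,φ)}`. -/
abbrev TQ (P Q : Subgroup S) : Type _ :=
  Σ φ : {φ : P →* S // Function.Injective φ ∧ φ.range = Q}, ↥(A.Fix P (φ : P →* S))

/-- The set of pairs `(φ, x)` with `φ : P →* S` injective and `x ∈ X^{(P,φ)}`. -/
abbrev TT (P : Subgroup S) : Type _ :=
  Σ φ : {φ : P →* S // Function.Injective φ}, ↥(A.Fix P (φ : P →* S))

lemma fix_conj {P : Subgroup S} {φ : P →* S} {x : X} (hx : x ∈ A.Fix P φ) (s : S) :
    A.smul s x ∈ A.Fix P ((cconj s).comp φ) := by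
  intro u
  rw [A.smul_rmul, hx u, A.smul_smul, A.smul_smul]
  congr 1
  show s * φ u = s * φ u * s⁻¹ * s
  group

lemma smul_cancel (hA : A.LeftFree) {s s' : S} {x : X} (h : A.smul s x = A.smul s' x) :
    s = s' := by
  have h2 : A.smul (s'⁻¹ * s) x = x := by
    rw [A.mul_smul, h, A.smul_smul, inv_mul_cancel, A.one_smul]
  exact (inv_mul_eq_one.mp (hA _ _ h2)).symm

/-- Conjugation action of `S` on `TT A P`. -/
def ttSmul {P : Subgroup S} (s : S) (t : TT A P) : TT A P :=
  ⟨⟨(cconj s).comp t.1.1, (cconj_injective s).comp t.1.2⟩,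
   ⟨A.smul s t.2.1, A.fix_conj t.2.2 s⟩⟩

lemma ttExt {P : Subgroup S} {t t' : TT A P} (h1 : (t.1 : P →* S) = t'.1)
    (h2 : (t.2 : X) = t'.2) : t = t' := by
  obtain ⟨⟨φ, hφ⟩, x, hx⟩ := t
  obtain ⟨⟨ψ, hψ⟩, y, hy⟩ := t'
  obtain rfl : φ = ψ := h1
  obtain rfl : x = y := h2
  rfl

lemma tqExt {P Q : Subgroup S} {t t' : TQ A P Q} (h1 : (t.1 : P →* S) = t'.1)
    (h2 : (t.2 : X) = t'.2) : t = t' := by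
  obtain ⟨⟨φ, hφ⟩, x, hx⟩ := t
  obtain ⟨⟨ψ, hψ⟩, y, hy⟩ := t'
  obtain rfl : φ = ψ := h1
  obtain rfl : x = y := h2
  rfl

lemma ttSmul_one {P : Subgroup S} (t : TT A P) : A.ttSmul 1 t = t := by
  refine A.ttExt ?_ ?_
  · show (cconj 1).comp (t.1 : P →* S) = t.1
    rw [cconj_one, MonoidHom.id_comp]
  · exact A.one_smul _

lemma ttSmul_mul {P : Subgroup S} (s s' : S) (t : TT A P) :
    A.ttSmul (s * s') t = A.ttSmul s (A.ttSmul s' t) := by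
  refine A.ttExt ?_ ?_
  · show (cconj (s * s')).comp (t.1 : P →* S) = (cconj s).comp ((cconj s').comp t.1)
    rw [← cconj_comp, MonoidHom.comp_assoc]
  · exact A.mul_smul s s' _

lemma ttSmul_free {P : Subgroup S} (hA : A.LeftFree) (s : S) (t : TT A P)
    (h : A.ttSmul s t = t) : s = 1 :=
  hA _ _ (congrArg (fun t : TT A P => (t.2 : X)) h)

lemma tt_rel {P : Subgroup S} (hA : A.Bifree) (t t' : TT A P) :
    Quotient.mk A.leftOrbitSetoid (t.2 : X) = Quotient.mk A.leftOrbitSetoid (t'.2 : X) ↔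
      ∃ s : S, t' = A.ttSmul s t := by
  constructor
  · intro h
    obtain ⟨s, hs⟩ : ∃ s : S, (t'.2 : X) = A.smul s (t.2 : X) := Quotient.exact h
    refine ⟨s, A.ttExt ?_ ?_⟩
    · ext u
      show (t'.1 : P →* S) u = s * (t.1 : P →* S) u * s⁻¹
      refine A.smul_cancel hA.1 (x := (t'.2 : X)) ?_
      have e1 : A.smul ((t'.1 : P →* S) u) (t'.2 : X) = A.rmul (t'.2 : X) u :=
        (t'.2.2 u).symm
      rw [e1, hs, A.smul_rmul, t.2.2 u, A.smul_smul, A.smul_smul]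
      congr 1
      group
    · exact hs
  · rintro ⟨s, rfl⟩
    exact Quot.sound ⟨s, rfl⟩

lemma exists_tt {P : Subgroup S} (hA : A.Bifree) (x : X)
    (hx : ∀ u : P, ∃ s : S, A.rmul x ↑u = A.smul s x) :
    ∃ t : TT A P, (t.2 : X) = x := by
  choose f hf using hx
  have hfmul : ∀ u v : P, f (u * v) = f u * f v := by
    intro u v
    refine A.smul_cancel hA.1 (x := x) ?_
    rw [← hf (u * v)]
    show A.rmul x ((u : S) * (v : S)) = A.smul (f u * f v) x
    rw [A.rmul_mul, hf u, A.smul_rmul, hf v, A.smul_smul]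
  have hinj : Function.Injective (MonoidHom.mk' f hfmul) := by
    refine (injective_iff_map_eq_one (MonoidHom.mk' f hfmul)).mpr ?_
    intro u hu
    have hfu : f u = 1 := hu
    have h2 : A.rmul x ↑u = x := by
      have h3 := hf u
      rw [hfu, A.one_smul] at h3
      exact h3
    exact Subtype.ext (hA.2 _ _ h2)
  exact ⟨⟨⟨MonoidHom.mk' f hfmul, hinj⟩, ⟨x, fun u => hf u⟩⟩, rfl⟩

/-- Conjugation action of the normalizer of `Q` on `TQ A P Q`. -/
def tqSmul {P Q : Subgroup S} (n : (Subgroup.normalizer (Q : Set S))) (t : TQ A P Q) : TQ A P Q :=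
  ⟨⟨(cconj (n : S)).comp t.1.1,
    ⟨(cconj_injective _).comp t.1.2.1,
     by rw [MonoidHom.range_comp, t.1.2.2]; exact (map_cconj_eq_iff Q _).mpr n.2⟩⟩,
   ⟨A.smul (n : S) t.2.1, A.fix_conj t.2.2 _⟩⟩

lemma card_normalizer_dvd_card_tq (hA : A.Bifree) (P Q : Subgroup S) :
    Nat.card (Subgroup.normalizer (Q : Set S)) ∣ Nat.card (TQ A P Q) := by
  refine free_act_dvd (A.tqSmul) ?_ ?_ ?_
  · intro t
    refine A.tqExt ?_ ?_
    · show (cconj ((1 : (Subgroup.normalizer (Q : Set S))) : S)).comp (t.1 : P →* S) = t.1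
      rw [show ((1 : (Subgroup.normalizer (Q : Set S))) : S) = 1 from rfl, cconj_one, MonoidHom.id_comp]
    · exact A.one_smul _
  · intro n m t
    refine A.tqExt ?_ ?_
    · show (cconj ((n * m : (Subgroup.normalizer (Q : Set S))) : S)).comp (t.1 : P →* S) =
        (cconj (n : S)).comp ((cconj (m : S)).comp t.1)
      rw [show ((n * m : (Subgroup.normalizer (Q : Set S))) : S) = (n : S) * (m : S) from rfl, ← cconj_comp,
        MonoidHom.comp_assoc]
    · exact A.mul_smul _ _ _
  · intro n t h
    exact Subtype.ext (hA.1 _ _ (congrArg (fun t : TQ A P Q => (t.2 : X)) h))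

/-- Conjugating by `s` gives an equivalence `TQ A P Q ≃ TQ A P (sQs⁻¹)`. -/
def tqConjEquiv (P Q : Subgroup S) (s : S) : TQ A P Q ≃ TQ A P (Q.map (cconj s)) where
  toFun t := ⟨⟨(cconj s).comp t.1.1,
      ⟨(cconj_injective _).comp t.1.2.1, by rw [MonoidHom.range_comp, t.1.2.2]⟩⟩,
      ⟨A.smul s t.2.1, A.fix_conj t.2.2 _⟩⟩
  invFun t := ⟨⟨(cconj s⁻¹).comp t.1.1,
      ⟨(cconj_injective _).comp t.1.2.1, by
        rw [MonoidHom.range_comp, t.1.2.2, Subgroup.map_map, cconj_comp, inv_mul_cancel,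
          cconj_one, Subgroup.map_id]⟩⟩,
      ⟨A.smul s⁻¹ t.2.1, A.fix_conj t.2.2 _⟩⟩
  left_inv t := by
    refine A.tqExt ?_ ?_
    · show (cconj s⁻¹).comp ((cconj s).comp (t.1 : P →* S)) = t.1
      rw [← MonoidHom.comp_assoc, cconj_comp, inv_mul_cancel, cconj_one, MonoidHom.id_comp]
    · show A.smul s⁻¹ (A.smul s (t.2 : X)) = t.2
      rw [A.smul_smul, inv_mul_cancel, A.one_smul]
  right_inv t := by
    refine A.tqExt ?_ ?_
    · show (cconj s).comp ((cconj s⁻¹).comp (t.1 : P →* S)) = t.1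
      rw [← MonoidHom.comp_assoc, cconj_comp, mul_inv_cancel, cconj_one, MonoidHom.id_comp]
    · show A.smul s (A.smul s⁻¹ (t.2 : X)) = t.2
      rw [A.smul_smul, mul_inv_cancel, A.one_smul]

lemma card_tq_conj {P Q Q' : Subgroup S} (h : SubSConj Q Q') :
    Nat.card (TQ A P Q) = Nat.card (TQ A P Q') := by
  obtain ⟨s, rfl⟩ := h
  exact Nat.card_congr (A.tqConjEquiv P Q s)

/-- Splitting `TT` into the pieces `TQ` according to the range. -/
def ttEquiv (P : Subgroup S) : TT A P ≃ Σ Q : Subgroup S, TQ A P Q where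
  toFun t := ⟨(t.1 : P →* S).range, ⟨⟨t.1, t.1.2, rfl⟩, t.2⟩⟩
  invFun t := ⟨⟨t.2.1, t.2.1.2.1⟩, t.2.2⟩
  left_inv t := rfl
  right_inv := by rintro ⟨Q, ⟨⟨φ, hinj, rfl⟩, x⟩⟩; rfl

lemma nonempty_iso_of_tq {P Q : Subgroup S} (t : TQ A P Q) : Nonempty (P ≃* Q) :=
  ⟨(MonoidHom.ofInjective t.1.2.1).trans (MulEquiv.subgroupCongr t.1.2.2)⟩

end BisetAction

lemma nat_card_sigma {ι : Type*} [Finite ι] (f : ι → Type*) [∀ i, Finite (f i)] :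
    Nat.card (Σ i, f i) = ∑ᶠ i, Nat.card (f i) := by
  cases nonempty_fintype ι
  letI : ∀ i, Fintype (f i) := fun i => Fintype.ofFinite _
  rw [Nat.card_eq_fintype_card, Fintype.card_sigma, finsum_eq_sum_of_fintype]
  exact Finset.sum_congr rfl fun i _ => Nat.card_eq_fintype_card.symm

namespace BisetAction

variable {S X : Type*} [Group S] (A : BisetAction S S X)

lemma card_tq_finsum [Finite S] [Finite X] (P Q : Subgroup S) :
    Nat.card (TQ A P Q) =
      ∑ᶠ φ : {φ : P →* S // Function.Injective φ ∧ φ.range = Q},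
        Nat.card (A.Fix P (φ : P →* S)) :=
  nat_card_sigma _

/-- The right `P`-action on the set of left `S`-orbits. -/
def rOrb (P : Subgroup S) : MulAction P (Quotient A.leftOrbitSetoid) where
  smul u := Quotient.lift (fun x => Quotient.mk A.leftOrbitSetoid (A.rmul x ((u : S))⁻¹))
    (fun x y hxy => by
      obtain ⟨h, rfl⟩ := hxy
      exact Quot.sound ⟨h, A.smul_rmul h x _⟩)
  one_smul b := by
    refine Quotient.inductionOn b fun x => ?_
    show Quotient.mk A.leftOrbitSetoid (A.rmul x (((1 : P) : S))⁻¹) =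
      Quotient.mk A.leftOrbitSetoid x
    rw [show ((1 : P) : S) = 1 from rfl, inv_one, A.rmul_one]
  mul_smul u v b := by
    refine Quotient.inductionOn b fun x => ?_
    show Quotient.mk A.leftOrbitSetoid (A.rmul x (((u * v : P) : S))⁻¹) =
      Quotient.mk A.leftOrbitSetoid (A.rmul (A.rmul x ((v : S))⁻¹) ((u : S))⁻¹)
    refine congrArg _ ?_
    rw [A.rmul_rmul, show ((u * v : P) : S) = (u : S) * (v : S) from rfl, mul_inv_rev]

lemma mem_fixedPoints_mk_iff (P : Subgroup S) (x : X) :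
    Quotient.mk A.leftOrbitSetoid x ∈
      @MulAction.fixedPoints P (Quotient A.leftOrbitSetoid) _ (A.rOrb P) ↔
      ∀ u : P, ∃ s : S, A.rmul x ↑u = A.smul s x := by
  letI := A.rOrb P
  rw [MulAction.mem_fixedPoints]
  constructor
  · intro h u
    have h2 := h u⁻¹
    have h3 : Quotient.mk A.leftOrbitSetoid (A.rmul x (((u⁻¹ : P) : S))⁻¹) =
        Quotient.mk A.leftOrbitSetoid x := h2
    rw [show ((u⁻¹ : P) : S) = ((u : S))⁻¹ from rfl, inv_inv] at h3
    obtain ⟨s, hs⟩ : ∃ s : S, x = A.smul s (A.rmul x (u : S)) := Quotient.exact h3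
    refine ⟨s⁻¹, ?_⟩
    conv_rhs => rw [hs]
    rw [A.smul_smul, inv_mul_cancel, A.one_smul]
  · intro h u
    show Quotient.mk A.leftOrbitSetoid (A.rmul x (((u : S)))⁻¹) =
      Quotient.mk A.leftOrbitSetoid x
    obtain ⟨s, hs⟩ := h u⁻¹
    rw [show ((u⁻¹ : P) : S) = ((u : S))⁻¹ from rfl] at hs
    refine Quot.sound ⟨s⁻¹, ?_⟩
    rw [hs, A.smul_smul, inv_mul_cancel, A.one_smul]

end BisetAction

/-- Let `S` be a finite `p`-group, `X` a finite bifree `(S,S)`-biset and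
`P ≤ S`.  Then (i) for every subgroup `Q ≤ S` abstractly isomorphic to `P`, `|N_S(Q)|`
divides `∑_{φ : P ≅ Q} |X^{(P,φ)}|`, and (ii) for any set `R` of representatives of the
`S`-conjugacy classes of subgroups of `S` isomorphic to `P`,
`∑_{[Q] ∈ R} (∑_{φ : P ≅ Q} |X^{(P,φ)}|)/|N_S(Q)| ≡ |X|/|S| (mod p)`. -/
theorem fixedPoint_congruence_subgroupwise
    (p : ℕ) (hp : p.Prime) (S : Type*) [Group S] [Finite S] (hS : IsPGroup p S)
    (X : Type*) [Finite X] (A : BisetAction S S X) (hA : A.Bifree) (P : Subgroup S) :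
    (∀ Q : Subgroup S, Nonempty (P ≃* Q) →
      Nat.card (Subgroup.normalizer (Q : Set S)) ∣
        ∑ᶠ φ : {φ : P →* S // Function.Injective φ ∧ φ.range = Q},
          Nat.card (A.Fix P (φ : P →* S))) ∧
    (∀ R : Finset (Subgroup S),
      (∀ Q ∈ R, Nonempty (P ≃* Q)) →
      (∀ Q : Subgroup S, Nonempty (P ≃* Q) → ∃ Q' ∈ R, SubSConj Q Q') →
      (∀ Q ∈ R, ∀ Q' ∈ R, SubSConj Q Q' → Q = Q') →
      (∑ Q ∈ R,
          (∑ᶠ φ : {φ : P →* S // Function.Injective φ ∧ φ.range = Q},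
            Nat.card (A.Fix P (φ : P →* S))) / Nat.card (Subgroup.normalizer (Q : Set S))) ≡
        Nat.card X / Nat.card S [MOD p]) := by

  classical
  haveI : Fact p.Prime := ⟨hp⟩
  letI : Fintype (Subgroup S) := Fintype.ofFinite _
  letI : MulAction P (Quotient A.leftOrbitSetoid) := A.rOrb P
  have hSpos : 0 < Nat.card S := Nat.card_pos
  -- |X| = |X/S| * |S|
  have hX : Nat.card X =
      Nat.card (Quotient A.leftOrbitSetoid) * Nat.card S :=
    free_act_card A.smul A.one_smul A.mul_smul hA.1 (Quotient.mk A.leftOrbitSetoid)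
      (fun y => Quotient.inductionOn y fun x => ⟨x, rfl⟩)
      (fun x y => ⟨fun h => Quotient.exact h, fun ⟨g, hg⟩ => Quot.sound ⟨g, hg⟩⟩)
  -- the p-group congruence on the orbit set
  have hmod : Nat.card (Quotient A.leftOrbitSetoid) ≡
      Nat.card (MulAction.fixedPoints P (Quotient A.leftOrbitSetoid)) [MOD p] :=
    (hS.to_subgroup P).card_modEq_card_fixedPoints _
  -- |TT| = |fixed points| * |S|
  have hq_mem : ∀ t : BisetAction.TT A P, Quotient.mk A.leftOrbitSetoid (t.2 : X) ∈
      MulAction.fixedPoints P (Quotient A.leftOrbitSetoid) := by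
    intro t
    exact (A.mem_fixedPoints_mk_iff P (t.2 : X)).mpr
      fun u => ⟨(t.1 : P →* S) u, t.2.2 u⟩
  have hTT : Nat.card (BisetAction.TT A P) =
      Nat.card (MulAction.fixedPoints P (Quotient A.leftOrbitSetoid)) * Nat.card S := by
    refine free_act_card (fun s t => A.ttSmul s t) (A.ttSmul_one) (A.ttSmul_mul)
      (fun s t h => A.ttSmul_free hA.1 s t h)
      (fun t => ⟨Quotient.mk A.leftOrbitSetoid (t.2 : X), hq_mem t⟩) ?_ ?_
    · rintro ⟨ω, hω⟩
      obtain ⟨x, rfl⟩ := Quotient.exists_rep ω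
      obtain ⟨t, ht⟩ := A.exists_tt hA x ((A.mem_fixedPoints_mk_iff P x).mp hω)
      exact ⟨t, Subtype.ext (show Quotient.mk A.leftOrbitSetoid (t.2 : X) = Quotient.mk A.leftOrbitSetoid x by rw [ht])⟩
    · intro t t'
      rw [Subtype.mk.injEq]
      exact A.tt_rel hA t t'
  -- divisibility
  have hdvd : ∀ Q : Subgroup S,
      Nat.card (Subgroup.normalizer (Q : Set S)) ∣ Nat.card (BisetAction.TQ A P Q) :=
    fun Q => A.card_normalizer_dvd_card_tq hA P Q
  constructor
  · intro Q _
    rw [← A.card_tq_finsum P Q]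
    exact hdvd Q
  · intro R hiso hcover hinj
    -- sum over all subgroups
    have hTTsum : Nat.card (BisetAction.TT A P) =
        ∑ Q : Subgroup S, Nat.card (BisetAction.TQ A P Q) := by
      rw [Nat.card_congr (A.ttEquiv P), nat_card_sigma, finsum_eq_sum_of_fintype]
    -- class sizes
    have hclass : ∀ Q : Subgroup S,
        (Finset.univ.filter (fun Q' => SubSConj Q' Q)).card * Nat.card (Subgroup.normalizer (Q : Set S)) =
          Nat.card S := by
      intro Q
      have h := card_conjClass_mul_card_normalizer Q
      rw [Nat.card_eq_fintype_card, Fintype.card_subtype] at h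
      exact h
    -- disjointness of the classes
    have hdisj : (↑R : Set (Subgroup S)).PairwiseDisjoint
        (fun Q => Finset.univ.filter (fun Q' => SubSConj Q' Q)) := by
      intro Q hQ Q' hQ' hne
      refine Finset.disjoint_left.mpr fun a ha ha' => hne ?_
      exact hinj Q hQ Q' hQ'
        (((Finset.mem_filter.mp ha).2.symm).trans (Finset.mem_filter.mp ha').2)
    -- the whole sum is supported on the union of the classes of elements of R
    have hsum_univ : ∑ Q : Subgroup S, Nat.card (BisetAction.TQ A P Q) =
        ∑ Q ∈ R, ∑ Q' ∈ Finset.univ.filter (fun Q' => SubSConj Q' Q),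
          Nat.card (BisetAction.TQ A P Q') := by
      rw [← Finset.sum_biUnion hdisj]
      refine (Finset.sum_subset (Finset.subset_univ _) ?_).symm
      intro Q _ hQ
      by_contra hne
      obtain ⟨t⟩ := (Nat.card_ne_zero.mp hne).1
      obtain ⟨Q', hQ'R, hconj⟩ := hcover Q (A.nonempty_iso_of_tq t)
      exact hQ (Finset.mem_biUnion.mpr
        ⟨Q', hQ'R, Finset.mem_filter.mpr ⟨Finset.mem_univ _, hconj⟩⟩)
    -- each class contributes class-size times the common value
    have hconst : ∀ Q ∈ R,
        ∑ Q' ∈ Finset.univ.filter (fun Q' => SubSConj Q' Q),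
          Nat.card (BisetAction.TQ A P Q') =
        (Finset.univ.filter (fun Q' => SubSConj Q' Q)).card *
          Nat.card (BisetAction.TQ A P Q) := by
      intro Q _
      rw [Finset.sum_congr rfl
        (fun Q' hQ' => A.card_tq_conj (Finset.mem_filter.mp hQ').2),
        Finset.sum_const, smul_eq_mul]
    -- main identity
    have hmain : Nat.card (MulAction.fixedPoints P (Quotient A.leftOrbitSetoid)) *
        Nat.card S =
        (∑ Q ∈ R, Nat.card (BisetAction.TQ A P Q) / Nat.card (Subgroup.normalizer (Q : Set S))) *
          Nat.card S := by
      calc Nat.card (MulAction.fixedPoints P (Quotient A.leftOrbitSetoid)) * Nat.card S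
          = Nat.card (BisetAction.TT A P) := hTT.symm
        _ = ∑ Q ∈ R, (Finset.univ.filter (fun Q' => SubSConj Q' Q)).card *
              Nat.card (BisetAction.TQ A P Q) := by
            rw [hTTsum, hsum_univ]
            exact Finset.sum_congr rfl hconst
        _ = ∑ Q ∈ R, (Nat.card (BisetAction.TQ A P Q) / Nat.card (Subgroup.normalizer (Q : Set S))) *
              Nat.card S := by
            refine Finset.sum_congr rfl fun Q _ => ?_
            conv_lhs => rw [← Nat.div_mul_cancel (hdvd Q)]
            rw [← hclass Q]
            ring
        _ = (∑ Q ∈ R, Nat.card (BisetAction.TQ A P Q) / Nat.card (Subgroup.normalizer (Q : Set S))) *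
              Nat.card S := by rw [Finset.sum_mul]
    have hPhi : (∑ Q ∈ R, Nat.card (BisetAction.TQ A P Q) / Nat.card (Subgroup.normalizer (Q : Set S))) =
        Nat.card (MulAction.fixedPoints P (Quotient A.leftOrbitSetoid)) :=
      (Nat.eq_of_mul_eq_mul_right hSpos hmain).symm
    have hXdiv : Nat.card X / Nat.card S = Nat.card (Quotient A.leftOrbitSetoid) := by
      rw [hX, Nat.mul_div_cancel _ hSpos]
    have hLHS : (∑ Q ∈ R,
        (∑ᶠ φ : {φ : P →* S // Function.Injective φ ∧ φ.range = Q},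
          Nat.card (A.Fix P (φ : P →* S))) / Nat.card (Subgroup.normalizer (Q : Set S))) =
        ∑ Q ∈ R, Nat.card (BisetAction.TQ A P Q) / Nat.card (Subgroup.normalizer (Q : Set S)) :=
      Finset.sum_congr rfl fun Q _ => by rw [← A.card_tq_finsum P Q]
    rw [hLHS, hPhi, hXdiv]
    exact hmod.symm
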